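/- arXiv:1611.05796 — 3 statements merged into one kernel-verified Lean document; each statement's English description precedes it below -/
import Mathlib

section
/- For any rate matrix Q indexed by a nonempty finite set 𝒳 and any real Δ ≥ 0, one has ‖e^{QΔ} − I‖ ≤ Δ‖Q‖. -/
open scoped BigOperators

/-- The operator norm of a matrix induced by the supremum norm on `X → ℝ`:
`‖A‖ = max_{x} Σ_{y} |A x y|`. -/
noncomputable def matNorm {X : Type*} [Fintype X] (A : Matrix X X ℝ) : ℝ :=
  ⨆ x, ∑ y, |A x y|

/-- A (transition) rate matrix: nonnegative off-diagonal entries, rows summing to zero. -/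
def IsRateMatrix {X : Type*} [Fintype X] (Q : Matrix X X ℝ) : Prop :=
  (∀ x y, x ≠ y → 0 ≤ Q x y) ∧ ∀ x, ∑ y, Q x y = 0

/-- The matrix exponential `e^A = Σ_{k≥0} A^k / k!`. -/
noncomputable def mexp {X : Type*} [Fintype X] [DecidableEq X] (A : Matrix X X ℝ) :
    Matrix X X ℝ :=
  ∑' k : ℕ, ((k.factorial : ℝ)⁻¹) • A ^ k

section Aux

variable {X : Type*} [Fintype X] [DecidableEq X]

lemma mexp_eq_exp (A : Matrix X X ℝ) : mexp A = NormedSpace.exp A := by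
  rw [NormedSpace.exp_eq_tsum ℝ]; rfl

lemma summable_mexp (A : Matrix X X ℝ) :
    Summable (fun k : ℕ => ((k.factorial : ℝ)⁻¹) • A ^ k) := by
  letI : SeminormedRing (Matrix X X ℝ) := Matrix.linftyOpSemiNormedRing
  letI : NormedRing (Matrix X X ℝ) := Matrix.linftyOpNormedRing
  letI : NormedAlgebra ℝ (Matrix X X ℝ) := Matrix.linftyOpNormedAlgebra
  letI : CompleteSpace (Matrix X X ℝ) :=
    (by infer_instance : CompleteSpace (X → X → ℝ))
  exact NormedSpace.expSeries_summable' (𝕂 := ℝ) A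

lemma summable_mexp_entry (A : Matrix X X ℝ) (x y : X) :
    Summable (fun k : ℕ => ((k.factorial : ℝ)⁻¹) * (A ^ k) x y) := by
  have h := summable_mexp A
  have h1 : Summable (fun k : ℕ => (((k.factorial : ℝ)⁻¹) • A ^ k) x) :=
    Pi.summable.mp h x
  have h2 := Pi.summable.mp h1 y
  simpa [Matrix.smul_apply] using h2

lemma mexp_apply (A : Matrix X X ℝ) (x y : X) :
    mexp A x y = ∑' k : ℕ, ((k.factorial : ℝ)⁻¹) * (A ^ k) x y := by
  have h := summable_mexp A
  have h1 : Summable (fun k : ℕ => (((k.factorial : ℝ)⁻¹) • A ^ k) x) :=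
    Pi.summable.mp h x
  rw [mexp]
  erw [tsum_apply h, tsum_apply h1]
  simp [Matrix.smul_apply]

lemma pow_entry_nonneg {M : Matrix X X ℝ} (hM : ∀ x y, 0 ≤ M x y) (k : ℕ) :
    ∀ x y, 0 ≤ (M ^ k) x y := by
  induction k with
  | zero => intro x y; by_cases h : x = y <;> simp [Matrix.one_apply, h]
  | succ n ih =>
    intro x y
    rw [pow_succ, Matrix.mul_apply]
    exact Finset.sum_nonneg fun z _ => mul_nonneg (ih x z) (hM z y)

lemma pow_row_sum {M : Matrix X X ℝ} {r : ℝ} (hM : ∀ x, ∑ y, M x y = r) (k : ℕ) :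
    ∀ x, ∑ y, (M ^ k) x y = r ^ k := by
  induction k with
  | zero => intro x; simp [Matrix.one_apply]
  | succ n ih =>
    intro x
    rw [pow_succ]
    simp only [Matrix.mul_apply]
    rw [Finset.sum_comm]
    calc ∑ z, ∑ y, (M ^ n) x z * M z y
        = ∑ z, (M ^ n) x z * r := by
          refine Finset.sum_congr rfl fun z _ => ?_
          rw [← Finset.mul_sum, hM z]
      _ = r ^ n * r := by rw [← Finset.sum_mul, ih x]
      _ = r ^ (n + 1) := by ring

lemma mexp_entry_nonneg {M : Matrix X X ℝ} (hM : ∀ x y, 0 ≤ M x y) (x y : X) :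
    0 ≤ mexp M x y := by
  rw [mexp_apply]
  refine tsum_nonneg fun k => mul_nonneg (by positivity) (pow_entry_nonneg hM k x y)

lemma mexp_diag_ge {M : Matrix X X ℝ} (hM : ∀ x y, 0 ≤ M x y) (x : X) :
    1 ≤ mexp M x x := by
  rw [mexp_apply]
  have h0 : ((Nat.factorial 0 : ℝ))⁻¹ * (M ^ 0) x x = 1 := by simp [Matrix.one_apply]
  calc (1 : ℝ) = ((Nat.factorial 0 : ℝ))⁻¹ * (M ^ 0) x x := h0.symm
    _ ≤ ∑' k : ℕ, ((k.factorial : ℝ)⁻¹) * (M ^ k) x x := by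
        refine le_hasSum (summable_mexp_entry M x x).hasSum 0 fun k _ => ?_
        exact mul_nonneg (by positivity) (pow_entry_nonneg hM k x x)

lemma mexp_row_sum {M : Matrix X X ℝ} {r : ℝ} (hM : ∀ x, ∑ y, M x y = r) (x : X) :
    ∑ y, mexp M x y = Real.exp r := by
  have : ∑ y, mexp M x y = ∑' k : ℕ, ∑ y, ((k.factorial : ℝ)⁻¹) * (M ^ k) x y := by
    simp_rw [mexp_apply]
    exact (Summable.tsum_finsetSum fun y _ => summable_mexp_entry M x y).symm
  rw [this]
  have : ∀ k : ℕ, ∑ y, ((k.factorial : ℝ)⁻¹) * (M ^ k) x y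
      = ((k.factorial : ℝ)⁻¹) • r ^ k := by
    intro k
    rw [← Finset.mul_sum, pow_row_sum hM k x, smul_eq_mul]
  simp_rw [this]
  rw [Real.exp_eq_exp_ℝ, NormedSpace.exp_eq_tsum ℝ]

lemma smul_one_diag (r : ℝ) :
    r • (1 : Matrix X X ℝ) = Matrix.diagonal (fun _ => r) := by
  ext x y
  by_cases h : x = y <;> simp [Matrix.one_apply, Matrix.diagonal_apply, h]

lemma mexp_shift (A : Matrix X X ℝ) (r : ℝ) :
    mexp (A + r • 1) = Real.exp r • mexp A := by
  rw [mexp_eq_exp, mexp_eq_exp]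
  have hc : Commute A (r • (1 : Matrix X X ℝ)) := by
    simpa using (Commute.one_right A).smul_right r
  rw [Matrix.exp_add_of_commute A (r • 1) hc, smul_one_diag,
    Matrix.exp_diagonal (fun _ : X => r)]
  rw [Pi.exp_def, ← Real.exp_eq_exp_ℝ, ← smul_one_diag, Matrix.mul_smul, mul_one]

end Aux

theorem stmt5 {X : Type*} [Fintype X] [Nonempty X] [DecidableEq X]
    (Q : Matrix X X ℝ) (hQ : IsRateMatrix Q) (Δ : ℝ) (hΔ : 0 ≤ Δ) :
    matNorm (mexp (Δ • Q) - 1) ≤ Δ * matNorm Q := by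
  obtain ⟨hoff, hrow⟩ := hQ
  -- diagonal entries are nonpositive
  have hdiag : ∀ x, Q x x ≤ 0 := by
    intro x
    have h := hrow x
    rw [← Finset.add_sum_erase _ _ (Finset.mem_univ x)] at h
    have : 0 ≤ ∑ y ∈ Finset.univ.erase x, Q x y :=
      Finset.sum_nonneg fun y hy => hoff x y (Ne.symm (Finset.ne_of_mem_erase hy))
    linarith
  -- absolute row sums of Q
  have habs : ∀ x, ∑ y, |Q x y| = -(2 * Q x x) := by
    intro x
    have h := hrow x
    rw [← Finset.add_sum_erase _ _ (Finset.mem_univ x)] at h ⊢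
    have h1 : ∑ y ∈ Finset.univ.erase x, |Q x y| = ∑ y ∈ Finset.univ.erase x, Q x y :=
      Finset.sum_congr rfl fun y hy =>
        abs_of_nonneg (hoff x y (Ne.symm (Finset.ne_of_mem_erase hy)))
    rw [h1, abs_of_nonpos (hdiag x)]
    linarith
  set c : ℝ := ⨆ x, -Q x x with hc
  have hbdd : BddAbove (Set.range fun x => -Q x x) := (Set.finite_range _).bddAbove
  have hcle : ∀ x, -Q x x ≤ c := fun x => le_ciSup hbdd x
  have hc0 : 0 ≤ c := by
    obtain ⟨x⟩ := ‹Nonempty X›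
    have := hdiag x
    have := hcle x
    linarith
  have h2c : 2 * c ≤ matNorm Q := by
    obtain ⟨x₀, hx₀⟩ := Finite.exists_max fun x => -Q x x
    have hcle' : c ≤ -Q x₀ x₀ := ciSup_le hx₀
    have hQbdd : BddAbove (Set.range fun x => ∑ y, |Q x y|) := (Set.finite_range _).bddAbove
    have : ∑ y, |Q x₀ y| ≤ matNorm Q := le_ciSup hQbdd x₀
    rw [habs x₀] at this
    linarith
  -- the shifted matrix
  set M : Matrix X X ℝ := Δ • Q + (Δ * c) • 1 with hM
  have hMnn : ∀ x y, 0 ≤ M x y := by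
    intro x y
    by_cases h : x = y
    · subst h
      have : Q x x + c ≥ 0 := by have := hcle x; linarith
      simp only [hM, Matrix.add_apply, Matrix.smul_apply, Matrix.one_apply_eq, smul_eq_mul,
        mul_one]
      nlinarith
    · simp only [hM, Matrix.add_apply, Matrix.smul_apply, Matrix.one_apply_ne h, smul_eq_mul,
        mul_zero, add_zero]
      exact mul_nonneg hΔ (hoff x y h)
  have hMrow : ∀ x, ∑ y, M x y = Δ * c := by
    intro x
    simp only [hM, Matrix.add_apply, Matrix.smul_apply, smul_eq_mul, Finset.sum_add_distrib,
      ← Finset.mul_sum, hrow x, mul_zero, zero_add]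
    rw [Finset.sum_eq_single x (fun y _ hy => by simp [Matrix.one_apply_ne (Ne.symm hy)])
      (fun h => absurd (Finset.mem_univ x) h)]
    simp
  -- the factorization
  have hfac : mexp (Δ • Q) = Real.exp (-(Δ * c)) • mexp M := by
    have := mexp_shift (Δ • Q) (Δ * c)
    rw [← hM] at this
    rw [this, smul_smul, ← Real.exp_add]
    simp
  have hPnn : ∀ x y, 0 ≤ mexp (Δ • Q) x y := by
    intro x y
    rw [hfac]
    exact mul_nonneg (Real.exp_nonneg _) (mexp_entry_nonneg hMnn x y)
  have hProw : ∀ x, ∑ y, mexp (Δ • Q) x y = 1 := by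
    intro x
    rw [hfac]
    simp only [Matrix.smul_apply, smul_eq_mul, ← Finset.mul_sum]
    rw [mexp_row_sum hMrow x, ← Real.exp_add]
    simp
  have hPdiag : ∀ x, 1 - Δ * c ≤ mexp (Δ • Q) x x := by
    intro x
    rw [hfac]
    have h1 : Real.exp (-(Δ * c)) * 1 ≤ Real.exp (-(Δ * c)) * mexp M x x :=
      mul_le_mul_of_nonneg_left (mexp_diag_ge hMnn x) (Real.exp_nonneg _)
    have h2 : 1 - Δ * c ≤ Real.exp (-(Δ * c)) := by
      have := Real.add_one_le_exp (-(Δ * c))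
      linarith
    rw [Matrix.smul_apply, smul_eq_mul]
    calc 1 - Δ * c ≤ Real.exp (-(Δ * c)) := h2
      _ = Real.exp (-(Δ * c)) * 1 := by ring
      _ ≤ _ := h1
  have hPle : ∀ x, mexp (Δ • Q) x x ≤ 1 := by
    intro x
    have h := hProw x
    rw [← Finset.add_sum_erase _ _ (Finset.mem_univ x)] at h
    have : 0 ≤ ∑ y ∈ Finset.univ.erase x, mexp (Δ • Q) x y :=
      Finset.sum_nonneg fun y _ => hPnn x y
    linarith
  -- row sums of |P - 1|
  have hkey : ∀ x, ∑ y, |(mexp (Δ • Q) - 1) x y| ≤ Δ * matNorm Q := by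
    intro x
    have hsum : ∑ y, |(mexp (Δ • Q) - 1) x y| = 2 * (1 - mexp (Δ • Q) x x) := by
      rw [← Finset.add_sum_erase _ _ (Finset.mem_univ x)]
      have h1 : ∑ y ∈ Finset.univ.erase x, |(mexp (Δ • Q) - 1) x y|
          = ∑ y ∈ Finset.univ.erase x, mexp (Δ • Q) x y := by
        refine Finset.sum_congr rfl fun y hy => ?_
        have hxy : x ≠ y := Ne.symm (Finset.ne_of_mem_erase hy)
        rw [Matrix.sub_apply, Matrix.one_apply_ne hxy, sub_zero]
        exact abs_of_nonneg (hPnn x y)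
      have h2 : ∑ y ∈ Finset.univ.erase x, mexp (Δ • Q) x y = 1 - mexp (Δ • Q) x x := by
        have h := hProw x
        rw [← Finset.add_sum_erase _ _ (Finset.mem_univ x)] at h
        linarith
      rw [h1, h2, Matrix.sub_apply, Matrix.one_apply_eq,
        abs_of_nonpos (by have := hPle x; linarith)]
      ring
    rw [hsum]
    have : 1 - Δ * c ≤ mexp (Δ • Q) x x := hPdiag x
    nlinarith
  exact ciSup_le hkey
end

section
/- Let 𝒬 be a nonempty bounded set of rate matrices indexed by a nonempty finite set 𝒳, let Q̲ be its lower envelope (defined by [Q̲f](x) := inf{[Qf](x) : Q ∈ 𝒬}), and let δ > 0 be such that δ‖Q̲‖ ≤ 1, where ‖Q̲‖ := sup{‖Q̲f‖ : ‖f‖ = 1}. Fix n ∈ ℕ and, for each i ∈ {1,…,n}, reals Δ_i with 0 ≤ Δ_i ≤ δ and matrices Q_i ∈ 𝒬. Then for every f ∈ ℝ^𝒳, (I+Δ_1Q_1)(I+Δ_2Q_2)⋯(I+Δ_nQ_n)f ≥ (I+Δ_1Q̲)∘(I+Δ_2Q̲)∘⋯∘(I+Δ_nQ̲) f, where the inequality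 between functions holds pointwise and the operators are composed in the given order. -/
open scoped BigOperators

/-- The lower envelope of a set of matrices: `[Q̲f](x) = inf{[Qf](x) : Q ∈ 𝒬}`, where a
matrix acts on `f ∈ ℝ^𝒳` by `[Qf](x) = Σ_y Q(x,y) f(y)`. -/
noncomputable def lowerEnvOp {X : Type*} [Fintype X]
    (𝒬 : Set (Matrix X X ℝ)) : (X → ℝ) → (X → ℝ) :=
  fun f x => ⨅ Q : 𝒬, (Q : Matrix X X ℝ).mulVec f x

/-- The operator norm `‖A‖ = sup{‖Af‖ : ‖f‖ = 1}` of a map of `ℝ^𝒳`, where `‖·‖` is the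
supremum norm. -/
noncomputable def opNorm {X : Type*} [Fintype X] (A : (X → ℝ) → (X → ℝ)) : ℝ :=
  ⨆ f : {f : X → ℝ // ‖f‖ = 1}, ‖A f.1‖

/-- The composition `T 0 ∘ T 1 ∘ ⋯ ∘ T (n-1)` of a finite family of operators,
in the given order. -/
def compFamily {X : Type*} {n : ℕ} (T : Fin n → ((X → ℝ) → (X → ℝ))) :
    (X → ℝ) → (X → ℝ) :=
  (List.ofFn T).foldr (· ∘ ·) id

private lemma sum_abs_le_matNorm' {X : Type*} [Fintype X] (Q : Matrix X X ℝ) (x : X) :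
    ∑ y, |Q x y| ≤ matNorm Q :=
  le_ciSup (f := fun x => ∑ y, |Q x y|) (Set.Finite.bddAbove (Set.finite_range _)) x

private lemma abs_mulVec_le' {X : Type*} [Fintype X] (Q : Matrix X X ℝ) (f : X → ℝ) (x : X) :
    |Q.mulVec f x| ≤ matNorm Q * ‖f‖ := by
  have h : |Q.mulVec f x| ≤ (∑ y, |Q x y|) * ‖f‖ := by
    rw [Matrix.mulVec, dotProduct, Finset.sum_mul]
    refine (Finset.abs_sum_le_sum_abs _ _).trans (Finset.sum_le_sum fun y _ => ?_)
    rw [abs_mul]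
    exact mul_le_mul_of_nonneg_left (Real.norm_eq_abs (f y) ▸ norm_le_pi_norm f y) (abs_nonneg _)
  exact h.trans (mul_le_mul_of_nonneg_right (sum_abs_le_matNorm' Q x) (norm_nonneg f))

private lemma compFamily_succ' {X : Type*} {n : ℕ} (T : Fin (n+1) → ((X → ℝ) → (X → ℝ))) :
    compFamily T = T 0 ∘ compFamily (fun i => T i.succ) := by
  simp [compFamily, List.ofFn_succ]


/-- Compositions `(I+Δ_1 Q_1)⋯(I+Δ_n Q_n)` of matrices from `𝒬` pointwise dominate the
corresponding composition `(I+Δ_1 Q̲)∘⋯∘(I+Δ_n Q̲)` of the lower envelope, provided all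
`Δ_i` lie in `[0,δ]` with `δ‖Q̲‖ ≤ 1`. -/
theorem stmt15 {X : Type*} [Fintype X] [Nonempty X]
    (𝒬 : Set (Matrix X X ℝ)) (hne : 𝒬.Nonempty)
    (hrate : ∀ Q ∈ 𝒬, IsRateMatrix Q)
    (hbdd : BddAbove (matNorm '' 𝒬))
    (δ : ℝ) (hδ : 0 < δ) (hδQ : δ * opNorm (lowerEnvOp 𝒬) ≤ 1)
    {n : ℕ} (Δ : Fin n → ℝ) (hΔ0 : ∀ i, 0 ≤ Δ i) (hΔδ : ∀ i, Δ i ≤ δ)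
    (Qs : Fin n → Matrix X X ℝ) (hQs : ∀ i, Qs i ∈ 𝒬)
    (f : X → ℝ) (x : X) :
    compFamily (fun i => fun g => g + Δ i • lowerEnvOp 𝒬 g) f x ≤
      compFamily (fun i => fun g => g + Δ i • (Qs i).mulVec g) f x := by
  classical
  haveI : Nonempty 𝒬 := hne.to_subtype
  obtain ⟨Q₀, hQ₀⟩ := hne
  set M : ℝ := sSup (matNorm '' 𝒬) with hMdef
  have hM : ∀ Q ∈ 𝒬, matNorm Q ≤ M := fun Q hQ => le_csSup hbdd ⟨Q, hQ, rfl⟩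
  have hmulbd : ∀ (Q) (_ : Q ∈ 𝒬) (g : X → ℝ) (y : X), |Q.mulVec g y| ≤ M * ‖g‖ :=
    fun Q hQ g y => (abs_mulVec_le' Q g y).trans
      (mul_le_mul_of_nonneg_right (hM Q hQ) (norm_nonneg g))
  -- lower envelope is below each element
  have hle : ∀ (Q) (_ : Q ∈ 𝒬) (g : X → ℝ) (y : X), lowerEnvOp 𝒬 g y ≤ Q.mulVec g y := by
    intro Q hQ g y
    have hbb : BddBelow (Set.range fun Q : 𝒬 => (Q : Matrix X X ℝ).mulVec g y) := by
      refine ⟨-(M * ‖g‖), ?_⟩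
      rintro a ⟨⟨Q', hQ'⟩, rfl⟩
      exact neg_le_of_abs_le (hmulbd Q' hQ' g y)
    exact ciInf_le hbb ⟨Q, hQ⟩
  have habs : ∀ (g : X → ℝ) (y : X), |lowerEnvOp 𝒬 g y| ≤ M * ‖g‖ := by
    intro g y
    rw [abs_le]
    constructor
    · exact le_ciInf fun ⟨Q, hQ⟩ => neg_le_of_abs_le (hmulbd Q hQ g y)
    · exact (hle Q₀ hQ₀ g y).trans (le_of_abs_le (hmulbd Q₀ hQ₀ g y))
  have hM0 : 0 ≤ M :=
    le_trans (le_trans (Finset.sum_nonneg fun y _ => abs_nonneg _)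
      (sum_abs_le_matNorm' Q₀ (Classical.arbitrary X))) (hM Q₀ hQ₀)
  -- opNorm is a sup of a bounded family
  have hopbdd : BddAbove (Set.range fun f : {f : X → ℝ // ‖f‖ = 1} => ‖lowerEnvOp 𝒬 f.1‖) := by
    refine ⟨M, ?_⟩
    rintro a ⟨⟨g, hg⟩, rfl⟩
    rw [show M = M * ‖g‖ by rw [hg, mul_one]]
    exact pi_norm_le_iff_of_nonneg (by rw [hg, mul_one]; exact hM0) |>.mpr
      fun y => Real.norm_eq_abs _ ▸ habs g y
  -- diagonal bound : -1 ≤ δ * Q x x for Q ∈ 𝒬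
  have hdiag : ∀ (Q) (_ : Q ∈ 𝒬) (y : X), -1 ≤ δ * Q y y := by
    intro Q hQ y
    set e : X → ℝ := Pi.single y 1 with hedef
    have he : ‖e‖ = 1 := by simp [hedef, Pi.norm_single]
    have hQyy : Q.mulVec e y = Q y y := by simp [hedef, Matrix.mulVec_single]
    have h1 : lowerEnvOp 𝒬 e y ≤ Q y y := hQyy ▸ hle Q hQ e y
    have h2 : -lowerEnvOp 𝒬 e y ≤ ‖lowerEnvOp 𝒬 e‖ :=
      (neg_le_abs _).trans (Real.norm_eq_abs _ ▸ norm_le_pi_norm _ y)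
    have h3 : ‖lowerEnvOp 𝒬 e‖ ≤ opNorm (lowerEnvOp 𝒬) :=
      le_ciSup (f := fun f : {f : X → ℝ // ‖f‖ = 1} => ‖lowerEnvOp 𝒬 f.1‖) hopbdd ⟨e, he⟩
    nlinarith
  -- monotonicity step
  have mono : ∀ (Q) (_ : Q ∈ 𝒬) (Δ₀ : ℝ), 0 ≤ Δ₀ → Δ₀ ≤ δ →
      ∀ g h : X → ℝ, (∀ y, g y ≤ h y) →
      ∀ y, g y + Δ₀ * Q.mulVec g y ≤ h y + Δ₀ * Q.mulVec h y := by
    intro Q hQ Δ₀ h0 hδ' g h hgh y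
    have hcoef : 0 ≤ 1 + Δ₀ * Q y y := by
      have h1 : -1 ≤ δ * Q y y := hdiag Q hQ y
      have hQy : Q y y ≤ 0 := by
        have hrow := (hrate Q hQ).2 y
        rw [← Finset.add_sum_erase Finset.univ (fun z => Q y z) (Finset.mem_univ y)] at hrow
        have : 0 ≤ ∑ z ∈ Finset.univ.erase y, Q y z :=
          Finset.sum_nonneg fun z hz =>
            (hrate Q hQ).1 y z (Finset.ne_of_mem_erase hz).symm
        linarith
      nlinarith
    have hdiff : 0 ≤ (h y - g y) + Δ₀ * (Q.mulVec h y - Q.mulVec g y) := by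
      have hmv : Q.mulVec h y - Q.mulVec g y = ∑ z, Q y z * (h z - g z) := by
        simp [Matrix.mulVec, dotProduct, ← Finset.sum_sub_distrib, mul_sub]
      rw [hmv, ← Finset.add_sum_erase Finset.univ _ (Finset.mem_univ y)]
      have hring : (h y - g y) + Δ₀ * (Q y y * (h y - g y) +
            ∑ z ∈ Finset.univ.erase y, Q y z * (h z - g z)) =
          (1 + Δ₀ * Q y y) * (h y - g y) +
            Δ₀ * ∑ z ∈ Finset.univ.erase y, Q y z * (h z - g z) := by ring
      rw [hring]
      have hs : 0 ≤ ∑ z ∈ Finset.univ.erase y, Q y z * (h z - g z) :=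
        Finset.sum_nonneg fun z hz =>
          mul_nonneg ((hrate Q hQ).1 y z (Finset.ne_of_mem_erase hz).symm)
            (sub_nonneg.mpr (hgh z))
      exact add_nonneg (mul_nonneg hcoef (sub_nonneg.mpr (hgh y))) (mul_nonneg h0 hs)
    linarith
  -- main induction
  suffices h : ∀ (m : ℕ) (Δ : Fin m → ℝ), (∀ i, 0 ≤ Δ i) → (∀ i, Δ i ≤ δ) →
      ∀ (Qs : Fin m → Matrix X X ℝ), (∀ i, Qs i ∈ 𝒬) → ∀ y,
      compFamily (fun i => fun g => g + Δ i • lowerEnvOp 𝒬 g) f y ≤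
        compFamily (fun i => fun g => g + Δ i • (Qs i).mulVec g) f y by
    exact h n Δ hΔ0 hΔδ Qs hQs x
  intro m
  induction m with
  | zero => intro Δ _ _ Qs _ y; simp [compFamily]
  | succ m ih =>
    intro Δ hΔ0 hΔδ Qs hQs y
    rw [compFamily_succ' (fun i => fun g => g + Δ i • lowerEnvOp 𝒬 g),
        compFamily_succ' (fun i => fun g => g + Δ i • (Qs i).mulVec g)]
    set g := compFamily (fun i : Fin m =>
      fun g => g + Δ i.succ • lowerEnvOp 𝒬 g) f with hgdef
    set h := compFamily (fun i : Fin m =>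
      fun g => g + Δ i.succ • (Qs i.succ).mulVec g) f with hhdef
    have hgh : ∀ z, g z ≤ h z := ih (fun i => Δ i.succ) (fun i => hΔ0 _) (fun i => hΔδ _)
      (fun i => Qs i.succ) (fun i => hQs _)
    show g y + Δ 0 * lowerEnvOp 𝒬 g y ≤ h y + Δ 0 * (Qs 0).mulVec h y
    calc g y + Δ 0 * lowerEnvOp 𝒬 g y
        ≤ g y + Δ 0 * (Qs 0).mulVec g y :=
          add_le_add (le_refl _) (mul_le_mul_of_nonneg_left (hle (Qs 0) (hQs 0) g y) (hΔ0 0))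
      _ ≤ h y + Δ 0 * (Qs 0).mulVec h y :=
          mono (Qs 0) (hQs 0) (Δ 0) (hΔ0 0) (hΔδ 0) g h hgh y
end

section
/- Let Q̲ be a lower transition rate operator on ℝ^𝒳 and let t, s be reals with 0 ≤ t ≤ s. Then there is a unique lower transition operator L such that: for every ε > 0 there exists δ > 0 such that for every finite partition t = t_0 < t_1 < ⋯ < t_n = s of [t,s] with max_i (t_i − t_{i−1}) ≤ δ, one has ‖L − (I+Δ_1Q̲)∘(I+Δ_2Q̲)∘⋯∘(I+Δ_nQ̲)‖ ≤ ε, where Δ_i := t_i − t_{i−1} and for maps A, B : ℝ^𝒳 → ℝ^𝒳, ‖A − B‖ := sup{‖Af − Bf‖ : f ∈ ℝ^𝒳, ‖f‖ = 1}. (In case t = s, the only partition is the single point t and the empty composition is the identity operator.) -/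
open scoped BigOperators

/-- A lower transition operator on `ℝ^𝒳`: bounded below by the minimum (LT1),
super-additive (LT2), and non-negatively homogeneous (LT3). -/
def IsLowerTransitionOperator {X : Type*} [Fintype X] (T : (X → ℝ) → (X → ℝ)) : Prop :=
  (∀ f : X → ℝ, ∀ x : X, (⨅ y, f y) ≤ T f x) ∧
  (∀ f g : X → ℝ, ∀ x : X, T f x + T g x ≤ T (f + g) x) ∧
  (∀ c : ℝ, 0 ≤ c → ∀ f : X → ℝ, T (c • f) = c • T f)

/-- A lower transition rate operator on `ℝ^𝒳`: maps constants to zero (LR1), is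
nonnegative on off-diagonal indicators (LR2), super-additive (LR3), and
non-negatively homogeneous (LR4). -/
def IsLowerTransitionRateOperator {X : Type*} [Fintype X] [DecidableEq X]
    (Q : (X → ℝ) → (X → ℝ)) : Prop :=
  (∀ c : ℝ, Q (fun _ => c) = 0) ∧
  (∀ x y : X, y ≠ x → 0 ≤ Q (Pi.single y 1) x) ∧
  (∀ f g : X → ℝ, ∀ x : X, Q f x + Q g x ≤ Q (f + g) x) ∧
  (∀ c : ℝ, 0 ≤ c → ∀ f : X → ℝ, Q (c • f) = c • Q f)

/-- The distance `‖A − B‖ = sup{‖Af − Bf‖ : ‖f‖ = 1}` between two maps of `ℝ^𝒳`,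
where `‖·‖` is the supremum norm. -/
noncomputable def opDist {X : Type*} [Fintype X]
    (A B : (X → ℝ) → (X → ℝ)) : ℝ :=
  ⨆ f : {f : X → ℝ // ‖f‖ = 1}, ‖A f.1 - B f.1‖

section A
set_option linter.unusedSectionVars false
variable {X : Type*} [Fintype X] [Nonempty X] [DecidableEq X]
  {Q : (X → ℝ) → (X → ℝ)} (hQ : IsLowerTransitionRateOperator Q)

/-- the bound `M`. -/
noncomputable def rateM (Q : (X → ℝ) → (X → ℝ)) : ℝ := ⨆ x : X, (-(Q (Pi.single x 1) x))

include hQ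

lemma Q_zero : Q 0 = 0 := by
  have := hQ.1 0; exact this

lemma Q_add_const (f : X → ℝ) (c : ℝ) : Q (f + fun _ => c) = Q f := by
  funext x
  have h1 := hQ.2.2.1 f (fun _ => c) x
  have h2 := hQ.2.2.1 (f + fun _ => c) (fun _ => (-c)) x
  have e1 : Q (fun _ => c) = 0 := hQ.1 c
  have e2 : Q (fun _ => (-c)) = 0 := hQ.1 (-c)
  have e3 : (f + fun _ => c) + (fun _ => (-c)) = f := by funext y; simp
  rw [e1] at h1; rw [e2, e3] at h2
  simp at h1 h2
  linarith

lemma Q_sum_le (s : Finset X) (g : X → (X → ℝ)) (x : X) :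
    ∑ y ∈ s, Q (g y) x ≤ Q (∑ y ∈ s, g y) x := by
  classical
  induction s using Finset.induction_on with
  | empty => simp [Q_zero hQ]
  | insert _ _ hx ih =>
      rename_i a s
      rw [Finset.sum_insert hx, Finset.sum_insert hx]
      calc Q (g a) x + ∑ y ∈ s, Q (g y) x ≤ Q (g a) x + Q (∑ y ∈ s, g y) x := by linarith
        _ ≤ Q (g a + ∑ y ∈ s, g y) x := hQ.2.2.1 _ _ x

lemma Q_single_self_nonpos (x : X) : Q (Pi.single x 1) x ≤ 0 := by
  have hsum : ∑ y : X, (Pi.single y 1 : X → ℝ) = fun _ => 1 := by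
    funext z; simp [Finset.sum_apply, Pi.single_apply]
  have h0 : Q (fun _ => (1:ℝ)) = 0 := hQ.1 1
  have h1 : ∑ y : X, Q (Pi.single y 1) x ≤ 0 := by
    have := Q_sum_le hQ Finset.univ (fun y => Pi.single y 1) x
    rw [hsum, h0] at this; simpa using this
  have h2 : Q (Pi.single x 1) x ≤ ∑ y : X, Q (Pi.single y 1) x := by
    have := Finset.sum_eq_sum_sdiff_singleton_add (Finset.mem_univ x)
      (fun y => Q (Pi.single y 1) x)
    rw [this]
    have : 0 ≤ ∑ y ∈ Finset.univ \ {x}, Q (Pi.single y 1) x :=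
      Finset.sum_nonneg fun y hy => hQ.2.1 x y (by simpa using (Finset.mem_sdiff.mp hy).2)
    linarith
  linarith

lemma rateM_nonneg : 0 ≤ rateM Q := by
  obtain ⟨x⟩ := ‹Nonempty X›
  have h1 : -(Q (Pi.single x 1) x) ≤ rateM Q :=
    le_ciSup (f := fun x : X => -(Q (Pi.single x 1) x)) (Finite.bddAbove_range _) x
  have := Q_single_self_nonpos hQ x
  linarith

lemma rateM_spec (x : X) : -(Q (Pi.single x 1) x) ≤ rateM Q :=
  le_ciSup (f := fun x : X => -(Q (Pi.single x 1) x)) (Finite.bddAbove_range _) x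

lemma Q_lower_of_nonneg (h : X → ℝ) (hh : ∀ y, 0 ≤ h y) (x : X) :
    -(h x * rateM Q) ≤ Q h x := by
  have hdec : h = ∑ y : X, (h y • (Pi.single y 1 : X → ℝ)) := by
    funext z
    simp [Finset.sum_apply, Pi.single_apply, mul_comm]
  have h1 : ∑ y : X, (h y) * Q (Pi.single y 1) x ≤ Q h x := by
    calc ∑ y : X, (h y) * Q (Pi.single y 1) x
        = ∑ y : X, Q (h y • (Pi.single y 1 : X → ℝ)) x := by
          refine Finset.sum_congr rfl fun y _ => ?_
          rw [hQ.2.2.2 (h y) (hh y)]; simp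
      _ ≤ Q (∑ y : X, h y • (Pi.single y 1 : X → ℝ)) x := Q_sum_le hQ _ _ x
      _ = Q h x := by rw [← hdec]
  have h2 : h x * Q (Pi.single x 1) x ≤ ∑ y : X, (h y) * Q (Pi.single y 1) x := by
    rw [Finset.sum_eq_sum_sdiff_singleton_add (Finset.mem_univ x)]
    have : 0 ≤ ∑ y ∈ Finset.univ \ {x}, (h y) * Q (Pi.single y 1) x :=
      Finset.sum_nonneg fun y hy => mul_nonneg (hh y)
        (hQ.2.1 x y (by simpa using (Finset.mem_sdiff.mp hy).2))
    linarith
  have h3 : -(h x * rateM Q) ≤ h x * Q (Pi.single x 1) x := by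
    have := rateM_spec hQ x
    nlinarith [hh x]
  linarith

end A

section B
set_option linter.unusedSectionVars false
variable {X : Type*} [Fintype X] [Nonempty X] [DecidableEq X]
  {Q : (X → ℝ) → (X → ℝ)} (hQ : IsLowerTransitionRateOperator Q)

include hQ

lemma Q_lower_norm (f : X → ℝ) (x : X) :
    -(2 * rateM Q * ‖f‖) ≤ Q f x := by
  set g : X → ℝ := f + fun _ => ‖f‖ with hg
  have hge : ∀ y, 0 ≤ g y := by
    intro y
    have : -‖f‖ ≤ f y := neg_le_of_abs_le (by simpa [Real.norm_eq_abs] using norm_le_pi_norm f y)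
    simp only [hg, Pi.add_apply]; linarith
  have hgle : g x ≤ 2 * ‖f‖ := by
    have : f x ≤ ‖f‖ := le_of_abs_le (by simpa [Real.norm_eq_abs] using norm_le_pi_norm f x)
    simp only [hg, Pi.add_apply]; linarith
  have h1 : -(g x * rateM Q) ≤ Q g x := Q_lower_of_nonneg hQ g hge x
  have h2 : Q g = Q f := Q_add_const hQ f ‖f‖
  have hM := rateM_nonneg hQ
  rw [h2] at h1
  nlinarith [norm_nonneg f]

lemma Q_norm_bound (f : X → ℝ) (x : X) : |Q f x| ≤ 2 * rateM Q * ‖f‖ := by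
  have h1 := Q_lower_norm hQ f x
  have h2 := Q_lower_norm hQ (-f) x
  have h3 := hQ.2.2.1 f (-f) x
  have h4 : f + (-f) = (0 : X → ℝ) := by funext y; simp
  rw [h4, congrFun (Q_zero hQ) x] at h3
  rw [norm_neg] at h2
  simp only [Pi.zero_apply] at h3
  rw [abs_le]; constructor <;> linarith

lemma Q_lip (f g : X → ℝ) (x : X) : |Q f x - Q g x| ≤ 2 * rateM Q * ‖f - g‖ := by
  have h1 := hQ.2.2.1 (f - g) g x
  rw [sub_add_cancel] at h1
  have h2 := hQ.2.2.1 (g - f) f x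
  rw [sub_add_cancel] at h2
  have h3 := Q_lower_norm hQ (f - g) x
  have h4 := Q_lower_norm hQ (g - f) x
  rw [norm_sub_rev] at h4
  rw [abs_le]; constructor <;> linarith

/-- the one-step operator `I + Δ Q`. -/
def Phi (Q : (X → ℝ) → (X → ℝ)) (Δ : ℝ) : (X → ℝ) → (X → ℝ) :=
  fun g => g + Δ • Q g

omit hQ in
lemma Phi_zero (g : X → ℝ) : Phi Q 0 g = g := by
  funext x; simp [Phi]

lemma Phi_LTO {Δ : ℝ} (h0 : 0 ≤ Δ) (h1 : Δ * rateM Q ≤ 1) :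
    IsLowerTransitionOperator (Phi Q Δ) := by
  refine ⟨?_, ?_, ?_⟩
  · intro f x
    set m : ℝ := ⨅ y, f y with hm
    have hbdd : BddBelow (Set.range f) := Finite.bddBelow_range f
    have hmle : ∀ y, m ≤ f y := fun y => ciInf_le hbdd y
    set h : X → ℝ := fun y => f y - m with hh
    have hfe : f = h + fun _ => m := by funext y; simp [hh]
    have hQf : Q f = Q h := by rw [hfe, Q_add_const hQ]
    have hlow : -(h x * rateM Q) ≤ Q h x :=
      Q_lower_of_nonneg hQ h (fun y => by simp [hh]; exact hmle y) x
    have hhx : 0 ≤ h x := by simp [hh]; exact hmle x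
    have : Phi Q Δ f x = f x + Δ * Q h x := by simp [Phi, hQf]
    rw [this]
    have hfx : f x = m + h x := by simp [hh]
    have hM := rateM_nonneg hQ
    nlinarith
  · intro f g x
    have := hQ.2.2.1 f g x
    simp only [Phi, Pi.add_apply, Pi.smul_apply, smul_eq_mul]
    nlinarith
  · intro c hc f
    have := hQ.2.2.2 c hc f
    funext x
    simp only [Phi, Pi.add_apply, Pi.smul_apply, smul_eq_mul, this]
    ring

end B

section C
set_option linter.unusedSectionVars false
variable {X : Type*} [Fintype X] [Nonempty X] [DecidableEq X]
  {T T₁ T₂ : (X → ℝ) → (X → ℝ)} (hT : IsLowerTransitionOperator T)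

include hT

lemma LTO_zero : T 0 = 0 := by
  have := hT.2.2 0 le_rfl 0
  simpa using this

lemma LTO_mono {f g : X → ℝ} (h : ∀ y, f y ≤ g y) (x : X) : T f x ≤ T g x := by
  have h1 := hT.2.1 (g - f) f x
  rw [sub_add_cancel] at h1
  have h2 : (0:ℝ) ≤ ⨅ y, (g - f) y :=
    le_ciInf fun y => by simp [sub_nonneg]; exact h y
  have h3 := hT.1 (g - f) x
  linarith

lemma LTO_nonexpansive (f g : X → ℝ) : ‖T f - T g‖ ≤ ‖f - g‖ := by
  rw [pi_norm_le_iff_of_nonneg (norm_nonneg _)]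
  intro x
  have key : ∀ a b : X → ℝ, T a x - T b x ≤ ‖a - b‖ := by
    intro a b
    have h1 := hT.2.1 (b - a) a x
    rw [sub_add_cancel] at h1
    have h2 := hT.1 (b - a) x
    have h3 : -‖a - b‖ ≤ ⨅ y, (b - a) y := by
      refine le_ciInf fun y => ?_
      have : |a y - b y| ≤ ‖a - b‖ := by
        simpa [Real.norm_eq_abs] using norm_le_pi_norm (a - b) y
      have := abs_le.mp this
      simp only [Pi.sub_apply]
      linarith [this.1]
    linarith
  have k1 := key f g
  have k2 := key g f
  rw [norm_sub_rev g f] at k2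
  simp only [Pi.sub_apply, Real.norm_eq_abs]
  rw [abs_le]; constructor <;> linarith

lemma LTO_norm_le (f : X → ℝ) : ‖T f‖ ≤ ‖f‖ := by
  have := LTO_nonexpansive hT f 0
  rw [LTO_zero hT] at this
  simpa using this

omit hT in
lemma LTO_comp (h1 : IsLowerTransitionOperator T₁) (h2 : IsLowerTransitionOperator T₂) :
    IsLowerTransitionOperator (T₁ ∘ T₂) := by
  refine ⟨?_, ?_, ?_⟩
  · intro f x
    have hb : BddBelow (Set.range f) := Finite.bddBelow_range f
    have : (⨅ y, f y) ≤ ⨅ y, T₂ f y :=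
      le_ciInf fun y => h2.1 f y
    exact this.trans (h1.1 (T₂ f) x)
  · intro f g x
    have ha : ∀ y, (T₂ f + T₂ g) y ≤ T₂ (f + g) y := fun y => h2.2.1 f g y
    have hm := LTO_mono h1 ha x
    have := h1.2.1 (T₂ f) (T₂ g) x
    simp only [Function.comp_apply]
    linarith
  · intro c hc f
    simp only [Function.comp_def, h2.2.2 c hc, h1.2.2 c hc]

omit hT in
lemma LTO_id : IsLowerTransitionOperator (id : (X → ℝ) → (X → ℝ)) := by
  refine ⟨fun f x => ciInf_le (Finite.bddBelow_range f) x, fun f g x => le_rfl, fun c hc f => rfl⟩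

end C

section D
set_option linter.unusedSectionVars false
variable {X : Type*} [Fintype X] [Nonempty X] [DecidableEq X]
  {Q : (X → ℝ) → (X → ℝ)} (hQ : IsLowerTransitionRateOperator Q)

/-- composition of one-step operators along a list of step sizes. -/
def compL (Q : (X → ℝ) → (X → ℝ)) (l : List ℝ) : (X → ℝ) → (X → ℝ) :=
  l.foldr (fun Δ T => Phi Q Δ ∘ T) id

/-- mesh of a list. -/
def mesh (l : List ℝ) : ℝ := l.foldr max 0

lemma mesh_nonneg (l : List ℝ) : 0 ≤ mesh l := by
  induction l with
  | nil => simp [mesh]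
  | cons a l ih => simp only [mesh, List.foldr] at *; exact le_max_of_le_right ih

lemma mesh_cons (a : ℝ) (l : List ℝ) : mesh (a :: l) = max a (mesh l) := rfl

lemma le_mesh {l : List ℝ} {a : ℝ} (h : a ∈ l) : a ≤ mesh l := by
  induction l with
  | nil => simp at h
  | cons b l ih =>
      rcases List.mem_cons.mp h with h | h
      · subst h; exact le_max_left _ _
      · exact (ih h).trans (le_max_right _ _)

lemma mesh_le {l : List ℝ} {δ : ℝ} (hδ : 0 ≤ δ) (h : ∀ a ∈ l, a ≤ δ) : mesh l ≤ δ := by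
  induction l with
  | nil => simpa [mesh]
  | cons b l ih =>
      rw [mesh_cons]
      exact max_le (h b (by simp)) (ih fun a ha => h a (List.mem_cons_of_mem _ ha))

lemma compL_cons (a : ℝ) (l : List ℝ) (f : X → ℝ) :
    compL Q (a :: l) f = Phi Q a (compL Q l f) := rfl

lemma compL_nil (f : X → ℝ) : compL Q [] f = f := rfl

include hQ

lemma compL_LTO {l : List ℝ} (h : ∀ a ∈ l, 0 ≤ a ∧ a * rateM Q ≤ 1) :
    IsLowerTransitionOperator (compL Q l) := by
  induction l with
  | nil => exact LTO_id
  | cons b l ih =>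
      have hb := h b (by simp)
      show IsLowerTransitionOperator (Phi Q b ∘ compL Q l)
      exact LTO_comp (Phi_LTO hQ hb.1 hb.2)
        (ih fun a ha => h a (List.mem_cons_of_mem _ ha))

lemma compL_zero_of_all_zero {l : List ℝ} (h0 : ∀ a ∈ l, 0 ≤ a) (hs : l.sum = 0)
    (f : X → ℝ) : compL Q l f = f := by
  induction l with
  | nil => rfl
  | cons b l ih =>
      have hb : 0 ≤ b := h0 b (by simp)
      have hl : 0 ≤ l.sum := List.sum_nonneg fun a ha => h0 a (List.mem_cons_of_mem _ ha)
      rw [List.sum_cons] at hs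
      have hb0 : b = 0 := by linarith
      have hl0 : l.sum = 0 := by linarith
      rw [compL_cons, ih (fun a ha => h0 a (List.mem_cons_of_mem _ ha)) hl0, hb0, Phi_zero]

end D

section E
set_option linter.unusedSectionVars false
set_option maxHeartbeats 1000000
variable {X : Type*} [Fintype X] [Nonempty X] [DecidableEq X]
  {Q : (X → ℝ) → (X → ℝ)} (hQ : IsLowerTransitionRateOperator Q)

include hQ

lemma Q_norm_bound' (f : X → ℝ) : ‖Q f‖ ≤ 2 * rateM Q * ‖f‖ := by
  rw [pi_norm_le_iff_of_nonneg (by have := rateM_nonneg hQ; positivity)]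
  intro x
  simpa [Real.norm_eq_abs] using Q_norm_bound hQ f x

lemma Phi_split {a b : ℝ} (ha : 0 ≤ a) (hb : 0 ≤ b) (f : X → ℝ) :
    ‖Phi Q (a + b) f - Phi Q a (Phi Q b f)‖ ≤ (2 * rateM Q)^2 * (a * b) * ‖f‖ := by
  have hM := rateM_nonneg hQ
  rw [pi_norm_le_iff_of_nonneg (by positivity)]
  intro x
  have hdiff : Phi Q (a + b) f x - Phi Q a (Phi Q b f) x
      = a * (Q f x - Q (f + b • Q f) x) := by
    simp only [Phi, Pi.add_apply, Pi.smul_apply, smul_eq_mul]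
    ring
  have hlip : |Q f x - Q (f + b • Q f) x| ≤ 2 * rateM Q * ‖f - (f + b • Q f)‖ :=
    Q_lip hQ f (f + b • Q f) x
  have hnb : ‖f - (f + b • Q f)‖ = b * ‖Q f‖ := by
    have : f - (f + b • Q f) = -(b • Q f) := by funext y; simp
    rw [this, norm_neg, norm_smul, Real.norm_eq_abs, abs_of_nonneg hb]
  have hQb := Q_norm_bound' hQ f
  simp only [Pi.sub_apply, Real.norm_eq_abs, hdiff]
  rw [abs_mul, abs_of_nonneg ha]
  calc a * |Q f x - Q (f + b • Q f) x| ≤ a * (2 * rateM Q * (b * ‖Q f‖)) := by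
        rw [← hnb]; exact mul_le_mul_of_nonneg_left hlip ha
    _ ≤ a * (2 * rateM Q * (b * (2 * rateM Q * ‖f‖))) := by
        have h1 : b * ‖Q f‖ ≤ b * (2 * rateM Q * ‖f‖) := mul_le_mul_of_nonneg_left hQb hb
        have h2 : 0 ≤ 2 * rateM Q := by positivity
        exact mul_le_mul_of_nonneg_left (mul_le_mul_of_nonneg_left h1 h2) ha
    _ = (2 * rateM Q)^2 * (a * b) * ‖f‖ := by ring

lemma pair_bound (n : ℕ) : ∀ d e : List ℝ, d.length + e.length ≤ n →
    (∀ a ∈ d, 0 ≤ a ∧ a * rateM Q ≤ 1) → (∀ a ∈ e, 0 ≤ a ∧ a * rateM Q ≤ 1) →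
    d.sum = e.sum → ∀ f : X → ℝ,
    ‖compL Q d f - compL Q e f‖ ≤
      (2 * rateM Q)^2 * d.sum * (mesh d + mesh e) * ‖f‖ := by
  have hM := rateM_nonneg hQ
  induction n with
  | zero =>
      intro d e hlen _ _ _ f
      rw [Nat.le_zero, Nat.add_eq_zero] at hlen
      rw [List.length_eq_zero_iff.mp hlen.1, List.length_eq_zero_iff.mp hlen.2]
      simp [compL_nil, mesh]
  | succ n ih =>
      have core : ∀ (a b : ℝ) (d' e' : List ℝ), a ≤ b →
          d'.length + e'.length + 1 ≤ n →
          (∀ x ∈ (a :: d'), 0 ≤ x ∧ x * rateM Q ≤ 1) →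
          (∀ x ∈ (b :: e'), 0 ≤ x ∧ x * rateM Q ≤ 1) →
          (a :: d').sum = (b :: e').sum → ∀ f : X → ℝ,
          ‖compL Q (a :: d') f - compL Q (b :: e') f‖ ≤
            (2 * rateM Q)^2 * (a :: d').sum * (mesh (a :: d') + mesh (b :: e')) * ‖f‖ := by
        intro a b d' e' hab hlen hd he hsum f
        have ha := hd a (by simp)
        have hb := he b (by simp)
        have hd' : ∀ x ∈ d', 0 ≤ x ∧ x * rateM Q ≤ 1 :=
          fun x hx => hd x (List.mem_cons_of_mem _ hx)
        have he' : ∀ x ∈ e', 0 ≤ x ∧ x * rateM Q ≤ 1 :=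
          fun x hx => he x (List.mem_cons_of_mem _ hx)
        have hba : (0:ℝ) ≤ b - a := by linarith
        have hbaM : (b - a) * rateM Q ≤ 1 := by nlinarith [ha.1, hb.2]
        have hba' : ∀ x ∈ ((b - a) :: e'), 0 ≤ x ∧ x * rateM Q ≤ 1 := by
          intro x hx
          rcases List.mem_cons.mp hx with h | h
          · subst h; exact ⟨hba, hbaM⟩
          · exact he' x h
        have hsum' : d'.sum = ((b - a) :: e').sum := by
          simp only [List.sum_cons] at hsum ⊢; linarith
        set g' : X → ℝ := compL Q e' f with hg'
        have hg'f : ‖g'‖ ≤ ‖f‖ := LTO_norm_le (compL_LTO hQ he') f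
        have hPhiA : IsLowerTransitionOperator (Phi Q a) := Phi_LTO hQ ha.1 ha.2
        have step1 : ‖compL Q (a :: d') f - Phi Q a (Phi Q (b - a) g')‖ ≤
            (2 * rateM Q)^2 * d'.sum * (mesh d' + mesh ((b - a) :: e')) * ‖f‖ := by
          rw [compL_cons]
          have hne := LTO_nonexpansive hPhiA (compL Q d' f) (Phi Q (b - a) g')
          have : Phi Q (b - a) g' = compL Q ((b - a) :: e') f := rfl
          rw [this] at hne ⊢
          exact hne.trans (ih d' ((b - a) :: e') (by simp only [List.length_cons]; omega) hd' hba' hsum' f)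
        have step2 : ‖Phi Q a (Phi Q (b - a) g') - compL Q (b :: e') f‖ ≤
            (2 * rateM Q)^2 * (a * (b - a)) * ‖f‖ := by
          rw [compL_cons]
          have := Phi_split hQ ha.1 hba g'
          rw [show a + (b - a) = b by ring] at this
          rw [norm_sub_rev]
          refine this.trans ?_
          have := mul_nonneg (sq_nonneg (2 * rateM Q)) (mul_nonneg ha.1 hba)
          nlinarith
        have tri := norm_sub_le_norm_sub_add_norm_sub (compL Q (a :: d') f)
          (Phi Q a (Phi Q (b - a) g')) (compL Q (b :: e') f)
        have main := tri.trans (add_le_add step1 step2)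
        refine main.trans ?_
        -- arithmetic
        have hsd : 0 ≤ d'.sum := List.sum_nonneg fun x hx => (hd' x hx).1
        have hm1 : 0 ≤ mesh d' := mesh_nonneg d'
        have hm2 : 0 ≤ mesh e' := mesh_nonneg e'
        have hF : 0 ≤ ‖f‖ := norm_nonneg f
        have hK : 0 ≤ (2 * rateM Q)^2 := sq_nonneg _
        rw [mesh_cons, mesh_cons, mesh_cons, List.sum_cons]
        have h10 : mesh d' + max (b - a) (mesh e') ≤ max a (mesh d') + max b (mesh e') :=
          add_le_add (le_max_right _ _) (max_le_max (by linarith) le_rfl)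
        have h11 : a * (b - a) ≤ a * (max a (mesh d') + max b (mesh e')) := by
          have hb1 : b - a ≤ max b (mesh e') := le_trans (by linarith) (le_max_left _ _)
          have : 0 ≤ max a (mesh d') := le_trans ha.1 (le_max_left _ _)
          nlinarith [ha.1]
        have hS : 0 ≤ max a (mesh d') + max b (mesh e') := by
          have := le_trans ha.1 (le_max_left a (mesh d'))
          have := le_trans hb.1 (le_max_left b (mesh e'))
          linarith
        have h12 : d'.sum * (mesh d' + max (b - a) (mesh e')) ≤
            d'.sum * (max a (mesh d') + max b (mesh e')) :=
          mul_le_mul_of_nonneg_left h10 hsd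
        have key : d'.sum * (mesh d' + max (b - a) (mesh e')) + a * (b - a) ≤
            (a + d'.sum) * (max a (mesh d') + max b (mesh e')) := by nlinarith
        nlinarith [mul_le_mul_of_nonneg_right (mul_le_mul_of_nonneg_left key hK) hF]
      intro d e hlen hd he hsum f
      match d, e with
      | [], e =>
          have : compL Q e f = f := compL_zero_of_all_zero hQ
            (fun a ha => (he a ha).1) (by simpa using hsum.symm) f
          simp [compL_nil, this, mesh]
      | d, [] =>
          have hds : d.sum = 0 := by simpa using hsum
          have : compL Q d f = f := compL_zero_of_all_zero hQ
            (fun a ha => (hd a ha).1) hds f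
          simp [compL_nil, this, hds]
      | a :: d', b :: e' =>
          simp only [List.length_cons] at hlen
          rcases le_total a b with hab | hab
          · exact core a b d' e' hab (by omega) hd he hsum f
          · have := core b a e' d' hab (by omega) he hd hsum.symm f
            rw [norm_sub_rev] at this
            refine this.trans ?_
            rw [hsum, add_comm (mesh (a :: d')) (mesh (b :: e'))]

end E

section F
set_option linter.unusedSectionVars false
set_option maxHeartbeats 1000000
open Filter Topology
variable {X : Type*} [Fintype X] [Nonempty X] [DecidableEq X]
  {Q : (X → ℝ) → (X → ℝ)} (hQ : IsLowerTransitionRateOperator Q)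

/-- uniform-partition approximation sequence. -/
noncomputable def unifT (Q : (X → ℝ) → (X → ℝ)) (r : ℝ) (n : ℕ) : (X → ℝ) → (X → ℝ) :=
  compL Q (List.replicate (n + ⌈r * rateM Q⌉₊ + 1) (r / (n + ⌈r * rateM Q⌉₊ + 1)))

/-- the limiting operator. -/
noncomputable def limL (Q : (X → ℝ) → (X → ℝ)) (r : ℝ) : (X → ℝ) → (X → ℝ) :=
  fun f => limUnder atTop (fun n => unifT Q r n f)

variable {r : ℝ} (hr : 0 ≤ r)

include hQ hr

lemma unifT_cond (n : ℕ) :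
    ∀ a ∈ List.replicate (n + ⌈r * rateM Q⌉₊ + 1) (r / (n + ⌈r * rateM Q⌉₊ + 1)),
      0 ≤ a ∧ a * rateM Q ≤ 1 := by
  intro a ha
  rw [List.eq_of_mem_replicate ha]
  have hm : (0:ℝ) < (n + ⌈r * rateM Q⌉₊ + 1 : ℕ) := by positivity
  constructor
  · positivity
  · rw [div_mul_eq_mul_div, div_le_one (by push_cast at hm ⊢; linarith)]
    have h1 : r * rateM Q ≤ (⌈r * rateM Q⌉₊ : ℝ) := Nat.le_ceil _
    push_cast
    linarith
omit hr

lemma unifT_sum (n : ℕ) :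
    (List.replicate (n + ⌈r * rateM Q⌉₊ + 1) (r / (n + ⌈r * rateM Q⌉₊ + 1))).sum = r := by
  rw [List.sum_replicate, nsmul_eq_mul]
  have hm : ((n + ⌈r * rateM Q⌉₊ + 1 : ℕ) : ℝ) ≠ 0 := by positivity
  push_cast at hm ⊢
  field_simp

include hr

lemma unifT_mesh (n : ℕ) :
    mesh (List.replicate (n + ⌈r * rateM Q⌉₊ + 1) (r / (n + ⌈r * rateM Q⌉₊ + 1)))
      ≤ r / (n + 1) := by
  have hm : (0:ℝ) < ((n:ℝ) + ⌈r * rateM Q⌉₊ + 1) := by positivity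
  refine mesh_le (by positivity) ?_
  intro a ha
  rw [List.eq_of_mem_replicate ha]
  push_cast
  have : (0:ℝ) < (n:ℝ) + 1 := by positivity
  apply div_le_div_of_nonneg_left hr this
  have h9 : (0:ℝ) ≤ (⌈r * rateM Q⌉₊ : ℝ) := Nat.cast_nonneg _
  linarith

lemma unifT_LTO (n : ℕ) : IsLowerTransitionOperator (unifT Q r n) :=
  compL_LTO hQ (unifT_cond hQ hr n)

lemma unifT_vs_list (n : ℕ) {d : List ℝ}
    (hd : ∀ a ∈ d, 0 ≤ a ∧ a * rateM Q ≤ 1) (hds : d.sum = r) (f : X → ℝ) :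
    ‖unifT Q r n f - compL Q d f‖ ≤
      (2 * rateM Q)^2 * r * (r / (n + 1) + mesh d) * ‖f‖ := by
  have h := pair_bound hQ
    ((List.replicate (n + ⌈r * rateM Q⌉₊ + 1) (r / (n + ⌈r * rateM Q⌉₊ + 1))).length + d.length)
    (List.replicate (n + ⌈r * rateM Q⌉₊ + 1) (r / (n + ⌈r * rateM Q⌉₊ + 1))) d le_rfl
    (unifT_cond hQ hr n) hd (by rw [unifT_sum hQ, hds]) f
  rw [unifT_sum hQ] at h
  refine h.trans ?_
  have hK : (0:ℝ) ≤ (2 * rateM Q)^2 := sq_nonneg _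
  have hmesh := unifT_mesh hQ hr n
  exact mul_le_mul_of_nonneg_right (mul_le_mul_of_nonneg_left
    (add_le_add hmesh le_rfl) (mul_nonneg hK hr)) (norm_nonneg f)

lemma unifT_cauchy (f : X → ℝ) : CauchySeq (fun n => unifT Q r n f) := by
  refine cauchySeq_of_le_tendsto_0 (fun N => (2 * rateM Q)^2 * r * (2 * (r / (N + 1))) * ‖f‖)
    (fun n m N hn hm => ?_) ?_
  · 
    rw [dist_eq_norm]
    have h := unifT_vs_list hQ hr n (d := List.replicate (m + ⌈r * rateM Q⌉₊ + 1)
      (r / (m + ⌈r * rateM Q⌉₊ + 1))) (unifT_cond hQ hr m) (unifT_sum hQ (r := r) m) f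
    have hK : (0:ℝ) ≤ (2 * rateM Q)^2 := sq_nonneg _
    have hmesh := unifT_mesh hQ hr m
    have h1 : r / ((n:ℝ) + 1) ≤ r / (N + 1) := by
      apply div_le_div_of_nonneg_left hr (by positivity)
      have : (N:ℝ) ≤ n := by exact_mod_cast hn
      linarith
    have h2 : r / ((m:ℝ) + 1) ≤ r / (N + 1) := by
      apply div_le_div_of_nonneg_left hr (by positivity)
      have : (N:ℝ) ≤ m := by exact_mod_cast hm
      linarith
    have hF := norm_nonneg f
    show _ ≤ (2 * rateM Q)^2 * r * (2 * (r / ((N:ℝ) + 1))) * ‖f‖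
    have h3 : r / ((n:ℝ) + 1) + mesh (List.replicate (m + ⌈r * rateM Q⌉₊ + 1)
        (r / (m + ⌈r * rateM Q⌉₊ + 1))) ≤ 2 * (r / ((N:ℝ) + 1)) := by
      push_cast at hmesh ⊢
      linarith
    exact h.trans (mul_le_mul_of_nonneg_right (mul_le_mul_of_nonneg_left h3
      (mul_nonneg hK hr)) hF)
  · have h1 : Tendsto (fun N : ℕ => ((N:ℝ) + 1)) atTop atTop :=
      tendsto_atTop_add_const_right _ 1 tendsto_natCast_atTop_atTop
    have h2 : Tendsto (fun N : ℕ => ((N:ℝ) + 1)⁻¹) atTop (𝓝 0) := h1.inv_tendsto_atTop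
    have h3 := h2.const_mul ((2 * rateM Q)^2 * r * 2 * r * ‖f‖)
    rw [mul_zero] at h3
    refine h3.congr fun N => ?_
    show _ = (2 * rateM Q)^2 * r * (2 * (r / ((N:ℝ) + 1))) * ‖f‖
    rw [div_eq_mul_inv]
    ring

lemma unifT_tendsto (f : X → ℝ) :
    Tendsto (fun n => unifT Q r n f) atTop (𝓝 (limL Q r f)) :=
  (unifT_cauchy hQ hr f).tendsto_limUnder

lemma limL_vs_list {d : List ℝ}
    (hd : ∀ a ∈ d, 0 ≤ a ∧ a * rateM Q ≤ 1) (hds : d.sum = r) (f : X → ℝ) :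
    ‖limL Q r f - compL Q d f‖ ≤ (2 * rateM Q)^2 * r * mesh d * ‖f‖ := by
  have hT : Tendsto (fun n => ‖unifT Q r n f - compL Q d f‖) atTop
      (𝓝 ‖limL Q r f - compL Q d f‖) :=
    ((unifT_tendsto hQ hr f).sub tendsto_const_nhds).norm
  have hR : Tendsto (fun n : ℕ => (2 * rateM Q)^2 * r * (r / (n + 1) + mesh d) * ‖f‖) atTop
      (𝓝 ((2 * rateM Q)^2 * r * (0 + mesh d) * ‖f‖)) := by
    have h1 : Tendsto (fun N : ℕ => ((N:ℝ) + 1)) atTop atTop :=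
      tendsto_atTop_add_const_right _ 1 tendsto_natCast_atTop_atTop
    have h2 : Tendsto (fun N : ℕ => r / ((N:ℝ) + 1)) atTop (𝓝 0) := by
      have := h1.inv_tendsto_atTop.const_mul r
      rw [mul_zero] at this
      exact this.congr fun N => by simp [Pi.inv_apply, div_eq_mul_inv]
    exact (((h2.add_const (mesh d)).const_mul ((2 * rateM Q)^2 * r)).mul_const ‖f‖)
  rw [zero_add] at hR
  exact le_of_tendsto_of_tendsto' hT hR (fun n => unifT_vs_list hQ hr n hd hds f)

lemma limL_LTO : IsLowerTransitionOperator (limL Q r) := by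
  refine ⟨?_, ?_, ?_⟩
  · intro f x
    have hx : Tendsto (fun n => unifT Q r n f x) atTop (𝓝 (limL Q r f x)) :=
      tendsto_pi_nhds.mp (unifT_tendsto hQ hr f) x
    exact ge_of_tendsto' hx fun n => (unifT_LTO hQ hr n).1 f x
  · intro f g x
    have hx : Tendsto (fun n => unifT Q r n f x + unifT Q r n g x) atTop
        (𝓝 (limL Q r f x + limL Q r g x)) :=
      ((tendsto_pi_nhds.mp (unifT_tendsto hQ hr f) x).add
        (tendsto_pi_nhds.mp (unifT_tendsto hQ hr g) x))
    have hy : Tendsto (fun n => unifT Q r n (f + g) x) atTop (𝓝 (limL Q r (f + g) x)) :=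
      tendsto_pi_nhds.mp (unifT_tendsto hQ hr (f + g)) x
    exact le_of_tendsto_of_tendsto' hx hy fun n => (unifT_LTO hQ hr n).2.1 f g x
  · intro c hc f
    funext x
    have h1 : Tendsto (fun n => unifT Q r n (c • f) x) atTop (𝓝 (limL Q r (c • f) x)) :=
      tendsto_pi_nhds.mp (unifT_tendsto hQ hr (c • f)) x
    have h2 : Tendsto (fun n => unifT Q r n (c • f) x) atTop (𝓝 (c * limL Q r f x)) := by
      have := (tendsto_pi_nhds.mp (unifT_tendsto hQ hr f) x).const_mul c
      refine this.congr fun n => ?_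
      rw [(unifT_LTO hQ hr n).2.2 c hc f]
      simp
    have := tendsto_nhds_unique h1 h2
    simpa using this

end F

section G
set_option linter.unusedSectionVars false
set_option maxHeartbeats 1000000
open Filter Topology
variable {X : Type*} [Fintype X] [Nonempty X] [DecidableEq X]
  {Q : (X → ℝ) → (X → ℝ)}

lemma compFamily_eq {n : ℕ} (dd : Fin n → ℝ) :
    compFamily (fun i => fun g : X → ℝ => g + dd i • Q g) = compL Q (List.ofFn dd) := by
  show compFamily (fun i => Phi Q (dd i)) = compL Q (List.ofFn dd)
  unfold compFamily compL
  rw [show (fun i => Phi Q (dd i)) = Phi Q ∘ dd from rfl, ← List.map_ofFn, List.foldr_map]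

lemma telescope : ∀ (n : ℕ) (u : Fin (n+1) → ℝ),
    ∑ i : Fin n, (u i.succ - u i.castSucc) = u (Fin.last n) - u 0 := by
  intro n
  induction n with
  | zero => intro u; simp
  | succ n ih =>
      intro u
      rw [Fin.sum_univ_castSucc]
      have h := ih (fun j : Fin (n+1) => u j.castSucc)
      simp only [Fin.succ_castSucc] at h ⊢
      rw [h, Fin.succ_last]
      simp [Fin.castSucc_zero]

lemma opDist_le {A B : (X → ℝ) → (X → ℝ)} {c : ℝ}
    (h : ∀ f : X → ℝ, ‖f‖ = 1 → ‖A f - B f‖ ≤ c) : opDist A B ≤ c := by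
  have : Nonempty {f : X → ℝ // ‖f‖ = 1} :=
    ⟨⟨fun _ => 1, by simp [pi_norm_const]⟩⟩
  exact ciSup_le fun f => h f.1 f.2

lemma le_opDist {A B : (X → ℝ) → (X → ℝ)}
    (hA : ∀ f : X → ℝ, ‖A f‖ ≤ ‖f‖) (hB : ∀ f : X → ℝ, ‖B f‖ ≤ ‖f‖)
    (f : X → ℝ) (hf : ‖f‖ = 1) : ‖A f - B f‖ ≤ opDist A B := by
  refine le_ciSup_of_le ?_ (⟨f, hf⟩ : {f : X → ℝ // ‖f‖ = 1}) le_rfl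
  refine ⟨2, ?_⟩
  rintro y ⟨g, rfl⟩
  have h1 := hA g.1
  have h2 := hB g.1
  rw [g.2] at h1 h2
  calc ‖A g.1 - B g.1‖ ≤ ‖A g.1‖ + ‖B g.1‖ := norm_sub_le _ _
    _ ≤ 2 := by linarith

end G


/-- For any lower transition rate operator `Q̲` and `0 ≤ t ≤ s`, there is a unique lower
transition operator `L` that is approximated, to within any `ε`, by the compositions
`(I+Δ_1Q̲)∘⋯∘(I+Δ_nQ̲)` over all sufficiently fine partitions `t = t_0 < ⋯ < t_n = s`. -/
theorem stmt18 {X : Type*} [Fintype X] [Nonempty X] [DecidableEq X]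
    (Ql : (X → ℝ) → (X → ℝ)) (hQl : IsLowerTransitionRateOperator Ql)
    (t s : ℝ) (ht : 0 ≤ t) (hts : t ≤ s) :
    ∃! L : (X → ℝ) → (X → ℝ), IsLowerTransitionOperator L ∧
      ∀ ε : ℝ, 0 < ε → ∃ δ : ℝ, 0 < δ ∧
        ∀ (n : ℕ) (u : Fin (n + 1) → ℝ), StrictMono u →
          u 0 = t → u (Fin.last n) = s →
          (∀ i : Fin n, u i.succ - u i.castSucc ≤ δ) →
          opDist L
            (compFamily (fun i : Fin n =>
              fun g => g + (u i.succ - u i.castSucc) • Ql g)) ≤ ε := by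
  have hM := rateM_nonneg hQl
  set M := rateM Ql with hMdef
  set r := s - t with hrdef
  have hr : 0 ≤ r := by simp [hrdef]; linarith
  set K := (2 * M)^2 with hKdef
  have hK : (0:ℝ) ≤ K := sq_nonneg _
  have hLTO : IsLowerTransitionOperator (limL Ql r) := limL_LTO hQl hr
  -- the approximation property for limL
  have happroxL : ∀ ε : ℝ, 0 < ε → ∃ δ : ℝ, 0 < δ ∧
      ∀ (n : ℕ) (u : Fin (n + 1) → ℝ), StrictMono u →
        u 0 = t → u (Fin.last n) = s →
        (∀ i : Fin n, u i.succ - u i.castSucc ≤ δ) →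
        opDist (limL Ql r)
          (compFamily (fun i : Fin n =>
            fun g => g + (u i.succ - u i.castSucc) • Ql g)) ≤ ε := by
    intro ε hε
    refine ⟨min (1/(M+1)) (ε/(K*r+1)), lt_min (by positivity) (by positivity), ?_⟩
    intro n u hu hu0 hus hδ
    have hpos : ∀ i : Fin n, 0 ≤ u i.succ - u i.castSucc :=
      fun i => le_of_lt (sub_pos.mpr (hu (Fin.castSucc_lt_succ (i := i))))
    have hδ1 : ∀ i : Fin n, u i.succ - u i.castSucc ≤ 1/(M+1) :=
      fun i => (hδ i).trans (min_le_left _ _)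
    have hδ2 : ∀ i : Fin n, u i.succ - u i.castSucc ≤ ε/(K*r+1) :=
      fun i => (hδ i).trans (min_le_right _ _)
    rw [compFamily_eq (Q := Ql) (fun i : Fin n => u i.succ - u i.castSucc)]
    set d := List.ofFn (fun i : Fin n => u i.succ - u i.castSucc) with hd
    have hmem : ∀ a ∈ d, 0 ≤ a ∧ a * M ≤ 1 := by
      intro a ha
      obtain ⟨i, hi⟩ := List.mem_ofFn.mp ha
      subst hi
      refine ⟨hpos i, ?_⟩
      have h2 := hδ1 i
      have : (0:ℝ) < M + 1 := by linarith
      rw [div_eq_mul_inv, one_mul] at h2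
      have hinv : (M+1) * (M+1)⁻¹ = 1 := mul_inv_cancel₀ (by linarith)
      nlinarith [hpos i, hM]
    have hsum : d.sum = r := by
      rw [hd, List.sum_ofFn, telescope n u, hu0, hus]
    have hmesh : mesh d ≤ ε/(K*r+1) := by
      refine mesh_le (by positivity) ?_
      intro a ha
      obtain ⟨i, hi⟩ := List.mem_ofFn.mp ha
      subst hi
      exact hδ2 i
    apply opDist_le
    intro f hf
    have h := limL_vs_list hQl hr hmem hsum f
    rw [hf, mul_one] at h
    refine h.trans ?_
    have h1 : K * r * mesh d ≤ K * r * (ε/(K*r+1)) :=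
      mul_le_mul_of_nonneg_left hmesh (mul_nonneg hK hr)
    refine h1.trans ?_
    rw [div_eq_mul_inv]
    have h3 : (0:ℝ) < K*r+1 := by positivity
    have h4 : K*r*(ε * (K*r+1)⁻¹) = ε * ((K*r)/(K*r+1)) := by
      rw [div_eq_mul_inv]; ring
    rw [h4]
    have h5 : (K*r)/(K*r+1) ≤ 1 := by
      rw [div_le_one h3]; linarith
    nlinarith
  refine ⟨limL Ql r, ⟨hLTO, happroxL⟩, ?_⟩
  -- uniqueness
  rintro L' ⟨hL'TO, happrox'⟩
  have key : ∀ f : X → ℝ, ‖f‖ = 1 → L' f = limL Ql r f := by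
    intro f hf
    have hnorm : ∀ ε : ℝ, 0 < ε → ‖L' f - limL Ql r f‖ ≤ 2*ε := by
      intro ε hε
      obtain ⟨δ1, hδ1, h1⟩ := happrox' ε hε
      obtain ⟨δ2, hδ2, h2⟩ := happroxL ε hε
      set c := min (min δ1 δ2) (1/(M+1)) with hc
      have hcpos : 0 < c := lt_min (lt_min hδ1 hδ2) (by positivity)
      -- construct a partition with mesh ≤ c
      obtain ⟨n, u, hu, hu0, hus, hδc⟩ : ∃ (n : ℕ) (u : Fin (n+1) → ℝ), StrictMono u ∧
          u 0 = t ∧ u (Fin.last n) = s ∧ (∀ i : Fin n, u i.succ - u i.castSucc ≤ c) := by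
        rcases eq_or_lt_of_le hr with hr0 | hrpos
        · refine ⟨0, fun _ => t, ?_, rfl, ?_, fun i => i.elim0⟩
          · intro i j hij
            exfalso
            have h1 : (i:ℕ) < (j:ℕ) := hij
            have := i.isLt
            have := j.isLt
            omega
          · have : s = t := by simp [hrdef] at hr0; linarith
            rw [this]
        · set k := ⌈r/c⌉₊ with hk
          set n := k + 1 with hn
          set Δ := r / n with hΔ
          have hnpos : (0:ℝ) < (n:ℝ) := by
            rw [hn]; push_cast; positivity
          have hΔpos : 0 < Δ := div_pos hrpos hnpos
          have hΔc : Δ ≤ c := by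
            rw [hΔ, div_le_iff₀ hnpos]
            have h6 : r/c ≤ (k:ℝ) := Nat.le_ceil _
            rw [div_le_iff₀ hcpos] at h6
            have h7 : (k:ℝ) * c ≤ (n:ℝ) * c := by
              have : (k:ℝ) ≤ (n:ℝ) := by rw [hn]; push_cast; linarith
              nlinarith
            calc r ≤ (k:ℝ)*c := h6
              _ ≤ (n:ℝ)*c := h7
              _ = c * (n:ℝ) := by ring
          refine ⟨n, fun i => t + (i:ℕ) * Δ, ?_, by simp, ?_, ?_⟩
          · intro i j hij
            have : ((i:ℕ):ℝ) < ((j:ℕ):ℝ) := by exact_mod_cast hij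
            have := mul_lt_mul_of_pos_right this hΔpos
            simpa using this
          · show t + ((Fin.last n : Fin (n+1)) : ℕ) * Δ = s
            rw [Fin.val_last, hΔ]
            field_simp
            rw [hrdef]
            ring
          · intro i
            show t + ((i.succ : Fin (n+1)) : ℕ) * Δ - (t + ((i.castSucc : Fin (n+1)) : ℕ) * Δ) ≤ c
            rw [Fin.val_succ, Fin.coe_castSucc]
            push_cast
            have heq : t + ((i:ℕ) + 1) * Δ - (t + (i:ℕ) * Δ) = Δ := by ring
            rw [heq]
            exact hΔc
      have hδu1 : ∀ i : Fin n, u i.succ - u i.castSucc ≤ δ1 :=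
        fun i => (hδc i).trans ((min_le_left _ _).trans (min_le_left _ _))
      have hδu2 : ∀ i : Fin n, u i.succ - u i.castSucc ≤ δ2 :=
        fun i => (hδc i).trans ((min_le_left _ _).trans (min_le_right _ _))
      have hδuM : ∀ i : Fin n, u i.succ - u i.castSucc ≤ 1/(M+1) :=
        fun i => (hδc i).trans (min_le_right _ _)
      have ha := h1 n u hu hu0 hus hδu1
      have hb := h2 n u hu hu0 hus hδu2
      set P := compFamily (fun i : Fin n => fun g : X → ℝ =>
        g + (u i.succ - u i.castSucc) • Ql g) with hP
      have hPL : IsLowerTransitionOperator P := by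
        rw [hP, compFamily_eq (Q := Ql) (fun i : Fin n => u i.succ - u i.castSucc)]
        refine compL_LTO hQl ?_
        intro a haa
        obtain ⟨i, hi⟩ := List.mem_ofFn.mp haa
        subst hi
        refine ⟨le_of_lt (sub_pos.mpr (hu (Fin.castSucc_lt_succ (i := i)))), ?_⟩
        have h2' := hδuM i
        have hpos := le_of_lt (sub_pos.mpr (hu (Fin.castSucc_lt_succ (i := i))))
        rw [div_eq_mul_inv, one_mul] at h2'
        have hinv : (M+1) * (M+1)⁻¹ = 1 := mul_inv_cancel₀ (by linarith)
        nlinarith [hM]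
      have e1 : ‖L' f - P f‖ ≤ ε :=
        (le_opDist (LTO_norm_le hL'TO) (LTO_norm_le hPL) f hf).trans ha
      have e2 : ‖limL Ql r f - P f‖ ≤ ε :=
        (le_opDist (LTO_norm_le hLTO) (LTO_norm_le hPL) f hf).trans hb
      have tri := norm_sub_le_norm_sub_add_norm_sub (L' f) (P f) (limL Ql r f)
      rw [norm_sub_rev (P f)] at tri
      linarith
    have h0 : ‖L' f - limL Ql r f‖ ≤ 0 := by
      refine le_of_forall_pos_le_add ?_
      intro ε hε
      have := hnorm (ε/2) (by positivity)
      linarith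
    have := le_antisymm h0 (norm_nonneg _)
    rwa [norm_eq_zero, sub_eq_zero] at this
  funext f
  by_cases hf0 : f = 0
  · rw [hf0]
    rw [show ((0:X→ℝ)) = (0:ℝ) • (0:X→ℝ) by simp]
    rw [hL'TO.2.2 0 le_rfl, hLTO.2.2 0 le_rfl]
    simp
  · have hnf : ‖f‖ ≠ 0 := norm_ne_zero_iff.mpr hf0
    set g : X → ℝ := ‖f‖⁻¹ • f with hg
    have hg1 : ‖g‖ = 1 := norm_smul_inv_norm hf0
    have hfg : f = ‖f‖ • g := by
      rw [hg, smul_inv_smul₀ hnf]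
    rw [hfg, hL'TO.2.2 ‖f‖ (norm_nonneg f) g, hLTO.2.2 ‖f‖ (norm_nonneg f) g, key g hg1]
end
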